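/- Let f: R^d → R be μ-strongly convex with L₂-Lipschitz Hessian, and write H_x = ∇²f(x). For every symmetric W ∈ R^{d×d} and all x, y ∈ R^d: ‖W‖_{F(H_x)} ≤ (1 + (L₂/μ)‖x − y‖₂) · ‖W‖_{F(H_y)}. -/

import Mathlib

open Matrix MeasureTheory Filter
open scoped Classical

noncomputable section

/-- Vectors in `ℝ^d` with the Euclidean (2-)norm. -/
abbrev Vec (d : ℕ) := EuclideanSpace ℝ (Fin d)

/-- Matrix square root of a positive semidefinite matrix (junk value `0` otherwise). -/
noncomputable def msqrt {d : ℕ} (M : Matrix (Fin d) (Fin d) ℝ) : Matrix (Fin d) (Fin d) ℝ :=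
  if h : M.PosSemidef then
    (h.1.eigenvectorUnitary : Matrix (Fin d) (Fin d) ℝ) *
      diagonal (fun i => Real.sqrt (h.1.eigenvalues i)) *
      (star (h.1.eigenvectorUnitary : Matrix (Fin d) (Fin d) ℝ))
  else 0

/-- Frobenius norm of a square matrix. -/
noncomputable def frobNorm {d : ℕ} (M : Matrix (Fin d) (Fin d) ℝ) : ℝ :=
  Real.sqrt (Matrix.trace (Mᵀ * M))

/-- Weighted Frobenius norm `‖W‖_{F(H)} = ‖H^{1/2} W H^{1/2}‖_F`. -/
noncomputable def wFrob {d : ℕ} (H W : Matrix (Fin d) (Fin d) ℝ) : ℝ :=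
  frobNorm (msqrt H * W * msqrt H)

/-- Local norm `‖v‖_H = √⟨H v, v⟩`. -/
noncomputable def localNorm {d : ℕ} (H : Matrix (Fin d) (Fin d) ℝ) (v : Vec d) : ℝ :=
  Real.sqrt (inner ℝ (Matrix.toEuclideanLin H v) v : ℝ)

/-- `f` is self-concordant, expressed through its Hessian map `Hf`:
the Hessian is everywhere positive definite and the local norms at nearby points are
comparable. -/
def SelfConcordant {d : ℕ} (Hf : Vec d → Matrix (Fin d) (Fin d) ℝ) : Prop :=
  (∀ x, (Hf x).PosDef) ∧
  ∀ x y v : Vec d, localNorm (Hf x) (y - x) < 1 → v ≠ 0 →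
    1 - localNorm (Hf x) (y - x) ≤ localNorm (Hf y) v / localNorm (Hf x) v ∧
      localNorm (Hf y) v / localNorm (Hf x) v ≤ 1 / (1 - localNorm (Hf x) (y - x))

/-- `g` is the gradient of `f` and `Hf` is its Hessian (the derivative of the gradient). -/
def IsGradHess {d : ℕ} (f : Vec d → ℝ) (g : Vec d → Vec d)
    (Hf : Vec d → Matrix (Fin d) (Fin d) ℝ) : Prop :=
  (∀ x, HasGradientAt f (g x) x) ∧
  ∀ x, HasFDerivAt g (Matrix.toEuclideanCLM (𝕜 := ℝ) (Hf x) : Vec d →L[ℝ] Vec d) x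

/-- Smallest eigenvalue of a symmetric matrix, via the Rayleigh quotient. -/
noncomputable def lambdaMin {d : ℕ} (M : Matrix (Fin d) (Fin d) ℝ) : ℝ :=
  ⨅ v : {v : Vec d // ‖v‖ = 1}, (inner ℝ (Matrix.toEuclideanLin M v.1) v.1 : ℝ)

/-- Entrywise expectation of a random matrix. -/
noncomputable def expMat {Ω : Type*} [MeasurableSpace Ω] (μ : Measure Ω)
    {m n : ℕ} (M : Ω → Matrix (Fin m) (Fin n) ℝ) : Matrix (Fin m) (Fin n) ℝ :=
  Matrix.of fun i j => ∫ ω, M ω i j ∂μ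

/-- The projection matrix `Z = H^{1/2} S (Sᵀ H S)⁻¹ Sᵀ H^{1/2}`. -/
noncomputable def sketchProj {d τ : ℕ} (H : Matrix (Fin d) (Fin d) ℝ)
    (S : Matrix (Fin d) (Fin τ) ℝ) : Matrix (Fin d) (Fin d) ℝ :=
  msqrt H * S * (Sᵀ * H * S)⁻¹ * Sᵀ * msqrt H

/-- The (randomized) BFGS update
`BFGS(B, H, S) = G + (I - G H) B (I - H G)` with `G = S (Sᵀ H S)⁻¹ Sᵀ`. -/
noncomputable def bfgsUpdate {d τ : ℕ} (B H : Matrix (Fin d) (Fin d) ℝ)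
    (S : Matrix (Fin d) (Fin τ) ℝ) : Matrix (Fin d) (Fin d) ℝ :=
  S * (Sᵀ * H * S)⁻¹ * Sᵀ +
    (1 - S * (Sᵀ * H * S)⁻¹ * Sᵀ * H) * B * (1 - H * (S * (Sᵀ * H * S)⁻¹ * Sᵀ))

/-- Spectral (operator 2-)norm of a matrix. -/
noncomputable def opNorm2 {d : ℕ} (M : Matrix (Fin d) (Fin d) ℝ) : ℝ :=
  ‖(Matrix.toEuclideanCLM (𝕜 := ℝ) M : Vec d →L[ℝ] Vec d)‖

instance matrixMeasurableSpace {m n : Type*} : MeasurableSpace (Matrix m n ℝ) :=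
  MeasurableSpace.pi

/-- The sketching matrices `S k` are i.i.d. samples from a common distribution `D`. -/
def IIDSketch {d τ : ℕ} {Ω : Type*} [MeasurableSpace Ω] (μ : Measure Ω)
    (S : ℕ → Ω → Matrix (Fin d) (Fin τ) ℝ) : Prop :=
  (∀ k, Measurable (S k)) ∧
  ProbabilityTheory.iIndepFun (m := fun _ => matrixMeasurableSpace) S μ ∧
  ∀ k, Measure.map (S k) μ = Measure.map (S 0) μ

end


section Aux

lemma msqrt_props {d : ℕ} {A : Matrix (Fin d) (Fin d) ℝ} (hA : A.PosSemidef) :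
    (msqrt A)ᴴ = msqrt A ∧ msqrt A * msqrt A = A := by
  rw [msqrt, dif_pos hA]
  set U := (hA.1.eigenvectorUnitary : Matrix (Fin d) (Fin d) ℝ) with hU
  have hUU : star U * U = 1 := Unitary.coe_star_mul_self _
  refine ⟨?_, ?_⟩
  · rw [Matrix.star_eq_conjTranspose]
    simp [Matrix.conjTranspose_mul, Matrix.mul_assoc]
  · have hD : diagonal (fun i => Real.sqrt (hA.1.eigenvalues i)) *
        diagonal (fun i => Real.sqrt (hA.1.eigenvalues i)) = diagonal (RCLike.ofReal ∘ hA.1.eigenvalues) := by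
      rw [diagonal_mul_diagonal]
      congr 1; funext i
      simp [Real.mul_self_sqrt (hA.eigenvalues_nonneg i)]
    calc U * diagonal (fun i => Real.sqrt (hA.1.eigenvalues i)) * star U *
          (U * diagonal (fun i => Real.sqrt (hA.1.eigenvalues i)) * star U)
        = U * (diagonal (fun i => Real.sqrt (hA.1.eigenvalues i)) * (star U * U) *
          diagonal (fun i => Real.sqrt (hA.1.eigenvalues i))) * star U := by
          simp only [Matrix.mul_assoc]
      _ = U * diagonal (RCLike.ofReal ∘ hA.1.eigenvalues) * star U := by
          rw [hUU, Matrix.mul_one, hD]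
      _ = A := by
          conv_rhs => rw [hA.1.spectral_theorem]
          simp [hU, Unitary.conjStarAlgAut_apply]

lemma quad_bridge {d : ℕ} (M : Matrix (Fin d) (Fin d) ℝ) (u : Fin d → ℝ) :
    (inner ℝ (Matrix.toEuclideanLin M ((WithLp.equiv 2 _).symm u)) ((WithLp.equiv 2 _).symm u) : ℝ)
      = dotProduct (star u) (M *ᵥ u) := by
  change dotProduct u (star (M *ᵥ u)) = _
  simp [dotProduct, mul_comm]

lemma trace_nonneg_of_psd {d : ℕ} {M : Matrix (Fin d) (Fin d) ℝ} (hM : M.PosSemidef) :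
    0 ≤ M.trace := by
  rw [Matrix.trace]
  refine Finset.sum_nonneg fun i _ => ?_
  have := hM.dotProduct_mulVec_nonneg (Pi.single i 1)
  simpa [Matrix.mulVec_single, dotProduct, Pi.single_apply] using this

lemma trace_mul_nonneg_of_psd {d : ℕ} {P Q : Matrix (Fin d) (Fin d) ℝ}
    (hP : P.PosSemidef) (hQ : Q.PosSemidef) : 0 ≤ (P * Q).trace := by
  have h1 : P = msqrt P * msqrt P := (msqrt_props hP).2.symm
  have h2 : (P * Q).trace = (msqrt P * Q * msqrt P).trace := by
    conv_lhs => rw [h1]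
    rw [mul_assoc, Matrix.trace_mul_comm]
  rw [h2]
  have : (msqrt P * Q * msqrt P).PosSemidef := by
    have := hQ.conjTranspose_mul_mul_same (msqrt P)
    rwa [(msqrt_props hP).1] at this
  exact trace_nonneg_of_psd this

lemma wFrob_trace {d : ℕ} {A : Matrix (Fin d) (Fin d) ℝ} (hA : A.PosSemidef)
    {W : Matrix (Fin d) (Fin d) ℝ} (hW : W.IsSymm) :
    wFrob A W = Real.sqrt ((W * A * W * A).trace) := by
  rw [wFrob, frobNorm]
  set R := msqrt A with hR
  have hRt : Rᵀ = R := by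
    rw [← Matrix.conjTranspose_eq_transpose_of_trivial]; exact (msqrt_props hA).1
  have hRR : R * R = A := (msqrt_props hA).2
  have hWt : Wᵀ = W := hW
  congr 1
  have hM : (R * W * R)ᵀ = R * W * R := by
    simp [Matrix.transpose_mul, hRt, hWt, mul_assoc]
  have key : (R * W * R) * (R * W * R) = R * (W * A * W) * R := by
    rw [← hRR]; simp only [mul_assoc]
  rw [hM, key, Matrix.trace_mul_cycle, ← Matrix.mul_assoc, hRR, Matrix.trace_mul_comm]
  simp only [mul_assoc]

lemma wFrob_le_of_loewner {d : ℕ} {A B : Matrix (Fin d) (Fin d) ℝ} {c : ℝ}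
    (hA : A.PosSemidef) (hB : B.PosSemidef) (hc : 0 ≤ c)
    (hAB : (c • B - A).PosSemidef) {W : Matrix (Fin d) (Fin d) ℝ} (hW : W.IsSymm) :
    wFrob A W ≤ c * wFrob B W := by
  have hWH : Wᴴ = W := by
    rw [Matrix.conjTranspose_eq_transpose_of_trivial]; exact hW
  have hP : (W * A * W).PosSemidef := by
    have := hA.conjTranspose_mul_mul_same W; rwa [hWH] at this
  have hQ : (W * B * W).PosSemidef := by
    have := hB.conjTranspose_mul_mul_same W; rwa [hWH] at this
  have t1 : ((W * A * W) * A).trace ≤ c * ((W * A * W) * B).trace := by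
    have h := trace_mul_nonneg_of_psd hP hAB
    rw [Matrix.mul_sub, Matrix.trace_sub, Matrix.mul_smul, Matrix.trace_smul, smul_eq_mul,
      sub_nonneg] at h
    exact h
  have t2 : ((W * B * W) * A).trace ≤ c * ((W * B * W) * B).trace := by
    have h := trace_mul_nonneg_of_psd hQ hAB
    rw [Matrix.mul_sub, Matrix.trace_sub, Matrix.mul_smul, Matrix.trace_smul, smul_eq_mul,
      sub_nonneg] at h
    exact h
  have swap : ((W * A * W) * B).trace = ((W * B * W) * A).trace := by
    rw [show (W * A * W) * B = (W * A) * (W * B) by simp only [mul_assoc],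
      Matrix.trace_mul_comm]
    simp only [mul_assoc]
  have tB : 0 ≤ ((W * B * W) * B).trace := trace_mul_nonneg_of_psd hQ hB
  have chain : (W * A * W * A).trace ≤ c ^ 2 * (W * B * W * B).trace := by
    calc (W * A * W * A).trace ≤ c * ((W * A * W) * B).trace := t1
    _ = c * ((W * B * W) * A).trace := by rw [swap]
    _ ≤ c * (c * ((W * B * W) * B).trace) := by
        exact mul_le_mul_of_nonneg_left t2 hc
    _ = c ^ 2 * (W * B * W * B).trace := by ring
  rw [wFrob_trace hA hW, wFrob_trace hB hW]
  calc Real.sqrt ((W * A * W * A).trace) ≤ Real.sqrt (c ^ 2 * (W * B * W * B).trace) :=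
        Real.sqrt_le_sqrt chain
  _ = c * Real.sqrt ((W * B * W * B).trace) := by
        rw [Real.sqrt_mul (sq_nonneg c), Real.sqrt_sq hc]

lemma grad_mono {d : ℕ} {f : Vec d → ℝ} {g : Vec d → Vec d} {mu : ℝ}
    (hstrconv : ∀ x y : Vec d, f x + (inner ℝ (g x) (y - x) : ℝ) + mu / 2 * ‖y - x‖ ^ 2 ≤ f y)
    (x y : Vec d) : mu * ‖y - x‖ ^ 2 ≤ (inner ℝ (g y - g x) (y - x) : ℝ) := by
  have h1 := hstrconv x y
  have h2 := hstrconv y x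
  have e1 : (inner ℝ (g y) (x - y) : ℝ) = - inner ℝ (g y) (y - x) := by
    rw [← inner_neg_right, neg_sub]
  have e2 : ‖x - y‖ = ‖y - x‖ := norm_sub_rev _ _
  rw [e1, e2] at h2
  have e3 : (inner ℝ (g y - g x) (y - x) : ℝ)
      = (inner ℝ (g y) (y - x) : ℝ) - (inner ℝ (g x) (y - x) : ℝ) := inner_sub_left _ _ _
  linarith

lemma hess_lower {d : ℕ} {g : Vec d → Vec d} {Hf : Vec d → Matrix (Fin d) (Fin d) ℝ}
    (hH : ∀ x, HasFDerivAt g (Matrix.toEuclideanCLM (𝕜 := ℝ) (Hf x) : Vec d →L[ℝ] Vec d) x)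
    {mu : ℝ} (hmono : ∀ x y : Vec d, mu * ‖y - x‖ ^ 2 ≤ (inner ℝ (g y - g x) (y - x) : ℝ))
    (x v : Vec d) : mu * ‖v‖ ^ 2 ≤ (inner ℝ (Matrix.toEuclideanLin (Hf x) v) v : ℝ) := by
  set T := (Matrix.toEuclideanCLM (𝕜 := ℝ) (Hf x) : Vec d →L[ℝ] Vec d)
  have key : mu * ‖v‖ ^ 2 ≤ (inner ℝ (T v) v : ℝ) := by
    have hcurve : HasDerivAt (fun t : ℝ => x + t • v) v 0 := by
      simpa using ((hasDerivAt_id (0 : ℝ)).smul_const v).const_add x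
    have hd : HasDerivAt (fun t : ℝ => g (x + t • v)) (T v) 0 := by
      have hgx : HasFDerivAt g T (x + (0 : ℝ) • v) := by simpa using hH x
      exact hgx.comp_hasDerivAt (0 : ℝ) hcurve
    have hslope := hasDerivAt_iff_tendsto_slope.1 hd
    have hinner : Tendsto (fun t : ℝ => (inner ℝ (slope (fun t : ℝ => g (x + t • v)) 0 t) v : ℝ))
        (nhdsWithin 0 {(0:ℝ)}ᶜ) (nhds (inner ℝ (T v) v : ℝ)) :=
      hslope.inner tendsto_const_nhds
    refine ge_of_tendsto hinner ?_
    filter_upwards [self_mem_nhdsWithin] with t ht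
    have ht0 : t ≠ 0 := ht
    have hm := hmono x (x + t • v)
    rw [add_sub_cancel_left] at hm
    have hns : ‖t • v‖ ^ 2 = t ^ 2 * ‖v‖ ^ 2 := by
      rw [norm_smul]; rw [mul_pow]; simp [sq_abs]
    rw [hns, real_inner_smul_right] at hm
    set I := (inner ℝ (g (x + t • v) - g x) v : ℝ) with hI
    have hsl : (inner ℝ (slope (fun t : ℝ => g (x + t • v)) 0 t) v : ℝ) = t⁻¹ * I := by
      rw [slope_def_module]
      simp only [zero_smul, add_zero, sub_zero]
      rw [real_inner_smul_left]
    rw [hsl]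
    have ht2 : (0 : ℝ) < t ^ 2 := by positivity
    have h5 : mu * ‖v‖ ^ 2 ≤ (t * I) / t ^ 2 := by
      rw [le_div_iff₀ ht2]; nlinarith
    calc mu * ‖v‖ ^ 2 ≤ (t * I) / t ^ 2 := h5
    _ = t⁻¹ * I := by field_simp
  have hTv : T v = Matrix.toEuclideanLin (Hf x) v := by
    rw [← Matrix.coe_toEuclideanCLM_eq_toEuclideanLin (𝕜 := ℝ) (Hf x)]
    rfl
  rwa [hTv] at key

noncomputable def T0 {d : ℕ} : Vec d →L[ℝ] (Vec d →L[ℝ] ℝ) :=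
  LinearMap.toContinuousLinearMap
    (((LinearMap.toContinuousLinearMap :
        (Vec d →ₗ[ℝ] ℝ) ≃ₗ[ℝ] (Vec d →L[ℝ] ℝ)).toLinearMap).comp (innerₗ (Vec d)))

@[simp] lemma T0_apply {d : ℕ} (u w : Vec d) : T0 u w = (inner ℝ u w : ℝ) := rfl

lemma hess_symm_inner {d : ℕ} {f : Vec d → ℝ} {g : Vec d → Vec d}
    {Hf : Vec d → Matrix (Fin d) (Fin d) ℝ}
    (hg : ∀ x, HasGradientAt f (g x) x)
    (hH : ∀ x, HasFDerivAt g (Matrix.toEuclideanCLM (𝕜 := ℝ) (Hf x) : Vec d →L[ℝ] Vec d) x)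
    (x v w : Vec d) :
    (inner ℝ (Matrix.toEuclideanLin (Hf x) v) w : ℝ) = inner ℝ (Matrix.toEuclideanLin (Hf x) w) v := by
  set T := (Matrix.toEuclideanCLM (𝕜 := ℝ) (Hf x) : Vec d →L[ℝ] Vec d)
  have hf' : ∀ y, HasFDerivAt f (T0 (g y)) y := by
    intro y
    have h1 := (hg y).hasFDerivAt
    have : T0 (g y) = InnerProductSpace.toDual ℝ (Vec d) (g y) := by
      ext w; simp [InnerProductSpace.toDual_apply_apply]
    rw [this]; exact h1
  have hf'' : HasFDerivAt (fun y => T0 (g y)) ((T0 : Vec d →L[ℝ] (Vec d →L[ℝ] ℝ)).comp T) x :=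
    (T0.hasFDerivAt).comp x (hH x)
  have hsym := second_derivative_symmetric hf' hf'' v w
  have hTv : ∀ u : Vec d, T u = Matrix.toEuclideanLin (Hf x) u := by
    intro u
    rw [← Matrix.coe_toEuclideanCLM_eq_toEuclideanLin (𝕜 := ℝ) (Hf x)]; rfl
  simpa [ContinuousLinearMap.comp_apply, hTv] using hsym

lemma hess_herm {d : ℕ} {f : Vec d → ℝ} {g : Vec d → Vec d}
    {Hf : Vec d → Matrix (Fin d) (Fin d) ℝ}
    (hg : ∀ x, HasGradientAt f (g x) x)
    (hH : ∀ x, HasFDerivAt g (Matrix.toEuclideanCLM (𝕜 := ℝ) (Hf x) : Vec d →L[ℝ] Vec d) x)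
    (x : Vec d) : (Hf x).IsHermitian := by
  have key := hess_symm_inner hg hH x
  rw [Matrix.IsHermitian]
  ext i j
  have h := key (EuclideanSpace.single j 1) (EuclideanSpace.single i 1)
  rw [Matrix.toEuclideanLin_apply, Matrix.toEuclideanLin_apply] at h
  simp only [EuclideanSpace.inner_single_right, _root_.map_one, one_mul] at h
  simp only [Matrix.conjTranspose_apply, star_trivial]
  have e : ∀ (k l : Fin d), ((Hf x) *ᵥ (EuclideanSpace.single l (1 : ℝ)).ofLp) k = (Hf x) k l := by
    intro k l
    simp [Matrix.mulVec_single]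
  rw [e, e] at h
  simpa using h.symm

end Aux

/-- **Change of metric in the weighted Frobenius norm under Lipschitz Hessian and strong
convexity.** -/
theorem wfrob_change_of_norm_strongly_convex
    {d : ℕ} (f : Vec d → ℝ) (g : Vec d → Vec d) (Hf : Vec d → Matrix (Fin d) (Fin d) ℝ)
    (hfgH : IsGradHess f g Hf)
    (mu L2 : ℝ) (hmu : 0 < mu)
    (hstrconv : ∀ x y : Vec d, f x + (inner ℝ (g x) (y - x) : ℝ) + mu / 2 * ‖y - x‖ ^ 2 ≤ f y)
    (hliphess : ∀ x y : Vec d, opNorm2 (Hf y - Hf x) ≤ L2 * ‖y - x‖)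
    (W : Matrix (Fin d) (Fin d) ℝ) (hW : W.IsSymm) :
    ∀ x y : Vec d, wFrob (Hf x) W ≤ (1 + L2 / mu * ‖x - y‖) * wFrob (Hf y) W := by
  intro x y
  have hg := hfgH.1
  have hH := hfgH.2
  have hmono := grad_mono hstrconv
  have hlow : ∀ (z v : Vec d), mu * ‖v‖ ^ 2 ≤ (inner ℝ (Matrix.toEuclideanLin (Hf z) v) v : ℝ) :=
    hess_lower hH hmono
  have hherm : ∀ z, (Hf z).IsHermitian := hess_herm hg hH
  -- positive semidefiniteness of the Hessians
  have hpsd : ∀ z, (Hf z).PosSemidef := by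
    intro z
    refine .of_dotProduct_mulVec_nonneg (hherm z) fun u => ?_
    rw [← quad_bridge]
    have := hlow z ((WithLp.equiv 2 (Fin d → ℝ)).symm u)
    nlinarith [norm_nonneg ((WithLp.equiv 2 (Fin d → ℝ)).symm u), this, hmu.le,
      sq_nonneg ‖(WithLp.equiv 2 (Fin d → ℝ)).symm u‖]
  set t : ℝ := L2 * ‖x - y‖ with htdef
  have hop := hliphess y x
  have ht0 : 0 ≤ t := le_trans (norm_nonneg _) hop
  set c : ℝ := 1 + L2 / mu * ‖x - y‖ with hcdef
  have hct : c = 1 + t / mu := by rw [hcdef, htdef]; ring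
  have hc0 : 0 ≤ c := by
    rw [hct]
    have : 0 ≤ t / mu := div_nonneg ht0 hmu.le
    linarith
  -- pointwise Loewner comparison
  have hTv : ∀ (M : Matrix (Fin d) (Fin d) ℝ) (u : Vec d),
      Matrix.toEuclideanLin M u = (Matrix.toEuclideanCLM (𝕜 := ℝ) M : Vec d →L[ℝ] Vec d) u := by
    intro M u
    rw [← Matrix.coe_toEuclideanCLM_eq_toEuclideanLin (𝕜 := ℝ) M]; rfl
  have lo : ∀ v : Vec d, (inner ℝ (Matrix.toEuclideanLin (Hf x) v) v : ℝ)
      ≤ c * (inner ℝ (Matrix.toEuclideanLin (Hf y) v) v : ℝ) := by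
    intro v
    have hdiff : (inner ℝ (Matrix.toEuclideanLin (Hf x - Hf y) v) v : ℝ) ≤ t * ‖v‖ ^ 2 := by
      have h1 : (inner ℝ (Matrix.toEuclideanLin (Hf x - Hf y) v) v : ℝ)
          ≤ ‖Matrix.toEuclideanLin (Hf x - Hf y) v‖ * ‖v‖ := real_inner_le_norm _ _
      have h2 : ‖Matrix.toEuclideanLin (Hf x - Hf y) v‖ ≤ opNorm2 (Hf x - Hf y) * ‖v‖ := by
        rw [hTv]
        exact ContinuousLinearMap.le_opNorm _ v
      have h3 : opNorm2 (Hf x - Hf y) * ‖v‖ ≤ t * ‖v‖ :=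
        mul_le_mul_of_nonneg_right hop (norm_nonneg v)
      calc (inner ℝ (Matrix.toEuclideanLin (Hf x - Hf y) v) v : ℝ)
          ≤ ‖Matrix.toEuclideanLin (Hf x - Hf y) v‖ * ‖v‖ := h1
        _ ≤ (opNorm2 (Hf x - Hf y) * ‖v‖) * ‖v‖ := mul_le_mul_of_nonneg_right h2 (norm_nonneg v)
        _ ≤ (t * ‖v‖) * ‖v‖ := mul_le_mul_of_nonneg_right h3 (norm_nonneg v)
        _ = t * ‖v‖ ^ 2 := by ring
    have hsplit : (inner ℝ (Matrix.toEuclideanLin (Hf x) v) v : ℝ)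
        = (inner ℝ (Matrix.toEuclideanLin (Hf y) v) v : ℝ)
          + (inner ℝ (Matrix.toEuclideanLin (Hf x - Hf y) v) v : ℝ) := by
      rw [map_sub]
      rw [LinearMap.sub_apply, inner_sub_left]
      ring
    have hb2 : t * ‖v‖ ^ 2 ≤ (t / mu) * (inner ℝ (Matrix.toEuclideanLin (Hf y) v) v : ℝ) := by
      have h4 : t * ‖v‖ ^ 2 = (t / mu) * (mu * ‖v‖ ^ 2) := by
        field_simp
      rw [h4]
      exact mul_le_mul_of_nonneg_left (hlow y v) (div_nonneg ht0 hmu.le)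
    rw [hsplit, hct]
    have := hlow y v
    nlinarith [hdiff, hb2]
  -- matrix Loewner comparison
  have hAB : (c • Hf y - Hf x).PosSemidef := by
    refine .of_dotProduct_mulVec_nonneg ?_ ?_
    · show (c • Hf y - Hf x)ᴴ = _
      rw [Matrix.conjTranspose_sub, Matrix.conjTranspose_smul, (hherm x).eq, (hherm y).eq]
      norm_num
    · intro u
      have h := lo ((WithLp.equiv 2 (Fin d → ℝ)).symm u)
      rw [quad_bridge, quad_bridge] at h
      rw [Matrix.sub_mulVec, Matrix.smul_mulVec, dotProduct_sub, dotProduct_smul,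
        smul_eq_mul, sub_nonneg]
      exact h
  exact wFrob_le_of_loewner (hpsd x) (hpsd y) hc0 hAB hW
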